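/- For all λ₁, λ₂ > 0, the invariant metric P = λ₁·Id_{𝔫₁} ⊕ λ₂·Id_{𝔫₂} on 𝔫 satisfies scal_N(P) = 1/λ₁ + 1/λ₂; equivalently, the normalized scalar curvature det(P)^{1/4}·scal_N(P) equals (λ₁λ₂)^{1/2}·(1/λ₁ + 1/λ₂). In particular, the normal metric P = Id_𝔫 satisfies Ric_N(Id_𝔫) = (1/2)·Id_𝔫, i.e. it is Einstein. -/

import Mathlib

noncomputable section

open Matrix

/-- `4×4` real matrices, the ambient space of `𝔰𝔬(4)`. -/
abbrev M4 := Matrix (Fin 4) (Fin 4) ℝ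

/-- The ad-invariant inner product `Q(X,Y) = -2·Tr(XY)` on `𝔰𝔬(4)`
(the negative of the Killing form). -/
def Q4 (X Y : M4) : ℝ := -2 * Matrix.trace (X * Y)

/-- elementary matrices -/
def E4 (i j : Fin 4) : M4 := Matrix.single i j 1

/-- first basis vector of `𝔨 = Lie(T²)` -/
def k1 : M4 := E4 0 1 - E4 1 0
/-- second basis vector of `𝔨 = Lie(T²)` -/
def k2 : M4 := E4 2 3 - E4 3 2
/-- first basis vector of `𝔫₁` -/
def u1 : M4 := (E4 0 2 - E4 2 0) - (E4 1 3 - E4 3 1)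
/-- second basis vector of `𝔫₁` -/
def u2 : M4 := (E4 0 3 - E4 3 0) + (E4 1 2 - E4 2 1)
/-- first basis vector of `𝔫₂` -/
def v1 : M4 := (E4 0 2 - E4 2 0) + (E4 1 3 - E4 3 1)
/-- second basis vector of `𝔫₂` -/
def v2 : M4 := (E4 0 3 - E4 3 0) - (E4 1 2 - E4 2 1)

/-- The horizontal space `𝔫 = 𝔫₁ ⊕ 𝔫₂`, the `Q`-orthogonal complement of `𝔨` in `𝔰𝔬(4)`. -/
def n4 : Submodule ℝ M4 := Submodule.span ℝ {u1, u2, v1, v2}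

/-- The `Q`-orthogonal basis `(u1, u2, v1, v2)` of `𝔫`; each vector has `Q`-norm² `8`. -/
def bN4 : Fin 4 → M4 := ![u1, u2, v1, v2]

/-- The `Q`-orthogonal projection of `𝔰𝔬(4)` onto `𝔨` (the vectors `k1, k2` have
`Q`-norm² `4`). -/
def projK4 (X : M4) : M4 := (Q4 X k1 / 4) • k1 + (Q4 X k2 / 4) • k2

/-- The `Q`-orthogonal projection of `𝔰𝔬(4)` onto `𝔫`. -/
def projN4 (X : M4) : M4 :=
  (Q4 X u1 / 8) • u1 + (Q4 X u2 / 8) • u2 + (Q4 X v1 / 8) • v1 + (Q4 X v2 / 8) • v2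

/-- The invariant metric `P = λ₁·Id_{𝔫₁} ⊕ λ₂·Id_{𝔫₂}` on `𝔫`. -/
def P4 (l1 l2 : ℝ) (X : M4) : M4 :=
  l1 • ((Q4 X u1 / 8) • u1 + (Q4 X u2 / 8) • u2)
    + l2 • ((Q4 X v1 / 8) • v1 + (Q4 X v2 / 8) • v2)

/-- The curvature `Rm_N(X,Y).W = ad([X,Y]_𝔨).W - [S_N(X),S_N(Y)].W - S_N([X,Y]_𝔫).W`
of `SO(4)/T²`, relative to the operator `SN = S_N(P)`. -/
def RmN4 (SN : M4 → M4 → M4) (X Y W : M4) : M4 :=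
  ⁅projK4 ⁅X, Y⁆, W⁆ - (SN X (SN Y W) - SN Y (SN X W)) - SN (projN4 ⁅X, Y⁆) W


section AuxLemmas
attribute [local instance] LieRing.ofAssociativeRing
lemma Q_u1u1 : Q4 u1 u1 = 8 := by
  simp [Q4, u1, E4, sub_mul, mul_sub, mul_add, add_mul,
    Matrix.single_mul_single_same, Matrix.single_mul_single_of_ne,
    Matrix.trace_single_eq_same, Matrix.trace_single_eq_of_ne]
  try norm_num

lemma Q_u1u2 : Q4 u1 u2 = 0 := by
  simp [Q4, u1, u2, E4, sub_mul, mul_sub, mul_add, add_mul,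
    Matrix.single_mul_single_same, Matrix.single_mul_single_of_ne,
    Matrix.trace_single_eq_same, Matrix.trace_single_eq_of_ne]
  try norm_num

lemma Q_u1v1 : Q4 u1 v1 = 0 := by
  simp [Q4, u1, v1, E4, sub_mul, mul_sub, mul_add, add_mul,
    Matrix.single_mul_single_same, Matrix.single_mul_single_of_ne,
    Matrix.trace_single_eq_same, Matrix.trace_single_eq_of_ne]
  try norm_num

lemma Q_u1v2 : Q4 u1 v2 = 0 := by
  simp [Q4, u1, v2, E4, sub_mul, mul_sub, mul_add, add_mul,
    Matrix.single_mul_single_same, Matrix.single_mul_single_of_ne,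
    Matrix.trace_single_eq_same, Matrix.trace_single_eq_of_ne]
  try norm_num

lemma Q_u2u2 : Q4 u2 u2 = 8 := by
  simp [Q4, u2, E4, sub_mul, mul_sub, mul_add, add_mul,
    Matrix.single_mul_single_same, Matrix.single_mul_single_of_ne,
    Matrix.trace_single_eq_same, Matrix.trace_single_eq_of_ne]
  try norm_num

lemma Q_u2v1 : Q4 u2 v1 = 0 := by
  simp [Q4, u2, v1, E4, sub_mul, mul_sub, mul_add, add_mul,
    Matrix.single_mul_single_same, Matrix.single_mul_single_of_ne,
    Matrix.trace_single_eq_same, Matrix.trace_single_eq_of_ne]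
  try norm_num

lemma Q_u2v2 : Q4 u2 v2 = 0 := by
  simp [Q4, u2, v2, E4, sub_mul, mul_sub, mul_add, add_mul,
    Matrix.single_mul_single_same, Matrix.single_mul_single_of_ne,
    Matrix.trace_single_eq_same, Matrix.trace_single_eq_of_ne]
  try norm_num

lemma Q_v1v1 : Q4 v1 v1 = 8 := by
  simp [Q4, v1, E4, sub_mul, mul_sub, mul_add, add_mul,
    Matrix.single_mul_single_same, Matrix.single_mul_single_of_ne,
    Matrix.trace_single_eq_same, Matrix.trace_single_eq_of_ne]
  try norm_num

lemma Q_v1v2 : Q4 v1 v2 = 0 := by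
  simp [Q4, v1, v2, E4, sub_mul, mul_sub, mul_add, add_mul,
    Matrix.single_mul_single_same, Matrix.single_mul_single_of_ne,
    Matrix.trace_single_eq_same, Matrix.trace_single_eq_of_ne]
  try norm_num

lemma Q_v2v2 : Q4 v2 v2 = 8 := by
  simp [Q4, v2, E4, sub_mul, mul_sub, mul_add, add_mul,
    Matrix.single_mul_single_same, Matrix.single_mul_single_of_ne,
    Matrix.trace_single_eq_same, Matrix.trace_single_eq_of_ne]
  try norm_num

lemma Q_k1u1 : Q4 k1 u1 = 0 := by
  simp [Q4, k1, u1, E4, sub_mul, mul_sub, mul_add, add_mul,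
    Matrix.single_mul_single_same, Matrix.single_mul_single_of_ne,
    Matrix.trace_single_eq_same, Matrix.trace_single_eq_of_ne]
  try norm_num

lemma Q_k1u2 : Q4 k1 u2 = 0 := by
  simp [Q4, k1, u2, E4, sub_mul, mul_sub, mul_add, add_mul,
    Matrix.single_mul_single_same, Matrix.single_mul_single_of_ne,
    Matrix.trace_single_eq_same, Matrix.trace_single_eq_of_ne]
  try norm_num

lemma Q_k1v1 : Q4 k1 v1 = 0 := by
  simp [Q4, k1, v1, E4, sub_mul, mul_sub, mul_add, add_mul,
    Matrix.single_mul_single_same, Matrix.single_mul_single_of_ne,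
    Matrix.trace_single_eq_same, Matrix.trace_single_eq_of_ne]
  try norm_num

lemma Q_k1v2 : Q4 k1 v2 = 0 := by
  simp [Q4, k1, v2, E4, sub_mul, mul_sub, mul_add, add_mul,
    Matrix.single_mul_single_same, Matrix.single_mul_single_of_ne,
    Matrix.trace_single_eq_same, Matrix.trace_single_eq_of_ne]
  try norm_num

lemma Q_k2u1 : Q4 k2 u1 = 0 := by
  simp [Q4, k2, u1, E4, sub_mul, mul_sub, mul_add, add_mul,
    Matrix.single_mul_single_same, Matrix.single_mul_single_of_ne,
    Matrix.trace_single_eq_same, Matrix.trace_single_eq_of_ne]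
  try norm_num

lemma Q_k2u2 : Q4 k2 u2 = 0 := by
  simp [Q4, k2, u2, E4, sub_mul, mul_sub, mul_add, add_mul,
    Matrix.single_mul_single_same, Matrix.single_mul_single_of_ne,
    Matrix.trace_single_eq_same, Matrix.trace_single_eq_of_ne]
  try norm_num

lemma Q_k2v1 : Q4 k2 v1 = 0 := by
  simp [Q4, k2, v1, E4, sub_mul, mul_sub, mul_add, add_mul,
    Matrix.single_mul_single_same, Matrix.single_mul_single_of_ne,
    Matrix.trace_single_eq_same, Matrix.trace_single_eq_of_ne]
  try norm_num

lemma Q_k2v2 : Q4 k2 v2 = 0 := by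
  simp [Q4, k2, v2, E4, sub_mul, mul_sub, mul_add, add_mul,
    Matrix.single_mul_single_same, Matrix.single_mul_single_of_ne,
    Matrix.trace_single_eq_same, Matrix.trace_single_eq_of_ne]
  try norm_num

lemma Q_k1k1 : Q4 k1 k1 = 4 := by
  simp [Q4, k1, E4, sub_mul, mul_sub, mul_add, add_mul,
    Matrix.single_mul_single_same, Matrix.single_mul_single_of_ne,
    Matrix.trace_single_eq_same, Matrix.trace_single_eq_of_ne]
  try norm_num

lemma Q_k1k2 : Q4 k1 k2 = 0 := by
  simp [Q4, k1, k2, E4, sub_mul, mul_sub, mul_add, add_mul,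
    Matrix.single_mul_single_same, Matrix.single_mul_single_of_ne,
    Matrix.trace_single_eq_same, Matrix.trace_single_eq_of_ne]
  try norm_num

lemma Q_k2k2 : Q4 k2 k2 = 4 := by
  simp [Q4, k2, E4, sub_mul, mul_sub, mul_add, add_mul,
    Matrix.single_mul_single_same, Matrix.single_mul_single_of_ne,
    Matrix.trace_single_eq_same, Matrix.trace_single_eq_of_ne]
  try norm_num

lemma lie_u1u2 : ⁅u1, u2⁆ = (-2:ℝ) • k1 + (-2:ℝ) • k2 := by
  simp [Ring.lie_def, k1, k2, u1, u2, E4, sub_mul, mul_sub, mul_add, add_mul,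
    Matrix.single_mul_single_same, Matrix.single_mul_single_of_ne]
  try module

lemma lie_v1v2 : ⁅v1, v2⁆ = (2:ℝ) • k1 + (-2:ℝ) • k2 := by
  simp [Ring.lie_def, k1, k2, v1, v2, E4, sub_mul, mul_sub, mul_add, add_mul,
    Matrix.single_mul_single_same, Matrix.single_mul_single_of_ne]
  try module

lemma lie_u1v1 : ⁅u1, v1⁆ = 0 := by
  simp [Ring.lie_def, u1, v1, E4, sub_mul, mul_sub, mul_add, add_mul,
    Matrix.single_mul_single_same, Matrix.single_mul_single_of_ne]
  try module

lemma lie_u1v2 : ⁅u1, v2⁆ = 0 := by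
  simp [Ring.lie_def, u1, v2, E4, sub_mul, mul_sub, mul_add, add_mul,
    Matrix.single_mul_single_same, Matrix.single_mul_single_of_ne]
  try module

lemma lie_u2v1 : ⁅u2, v1⁆ = 0 := by
  simp [Ring.lie_def, u2, v1, E4, sub_mul, mul_sub, mul_add, add_mul,
    Matrix.single_mul_single_same, Matrix.single_mul_single_of_ne]
  try module

lemma lie_u2v2 : ⁅u2, v2⁆ = 0 := by
  simp [Ring.lie_def, u2, v2, E4, sub_mul, mul_sub, mul_add, add_mul,
    Matrix.single_mul_single_same, Matrix.single_mul_single_of_ne]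
  try module

lemma lie_k1u1 : ⁅k1, u1⁆ = (-1:ℝ) • u2 := by
  simp [Ring.lie_def, k1, u1, u2, E4, sub_mul, mul_sub, mul_add, add_mul,
    Matrix.single_mul_single_same, Matrix.single_mul_single_of_ne]
  try module

lemma lie_k1u2 : ⁅k1, u2⁆ = u1 := by
  simp [Ring.lie_def, k1, u1, u2, E4, sub_mul, mul_sub, mul_add, add_mul,
    Matrix.single_mul_single_same, Matrix.single_mul_single_of_ne]
  try module

lemma lie_k1v1 : ⁅k1, v1⁆ = v2 := by
  simp [Ring.lie_def, k1, v1, v2, E4, sub_mul, mul_sub, mul_add, add_mul,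
    Matrix.single_mul_single_same, Matrix.single_mul_single_of_ne]
  try module

lemma lie_k1v2 : ⁅k1, v2⁆ = (-1:ℝ) • v1 := by
  simp [Ring.lie_def, k1, v1, v2, E4, sub_mul, mul_sub, mul_add, add_mul,
    Matrix.single_mul_single_same, Matrix.single_mul_single_of_ne]
  try module

lemma lie_k2u1 : ⁅k2, u1⁆ = (-1:ℝ) • u2 := by
  simp [Ring.lie_def, k2, u1, u2, E4, sub_mul, mul_sub, mul_add, add_mul,
    Matrix.single_mul_single_same, Matrix.single_mul_single_of_ne]
  try module

lemma lie_k2u2 : ⁅k2, u2⁆ = u1 := by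
  simp [Ring.lie_def, k2, u1, u2, E4, sub_mul, mul_sub, mul_add, add_mul,
    Matrix.single_mul_single_same, Matrix.single_mul_single_of_ne]
  try module

lemma lie_k2v1 : ⁅k2, v1⁆ = (-1:ℝ) • v2 := by
  simp [Ring.lie_def, k2, v1, v2, E4, sub_mul, mul_sub, mul_add, add_mul,
    Matrix.single_mul_single_same, Matrix.single_mul_single_of_ne]
  try module

lemma lie_k2v2 : ⁅k2, v2⁆ = v1 := by
  simp [Ring.lie_def, k2, v1, v2, E4, sub_mul, mul_sub, mul_add, add_mul,
    Matrix.single_mul_single_same, Matrix.single_mul_single_of_ne]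
  try module

lemma Q4_symm (X Y : M4) : Q4 X Y = Q4 Y X := by
  simp [Q4, Matrix.trace_mul_comm X Y]

lemma Q4_add_left (X Y Z : M4) : Q4 (X + Y) Z = Q4 X Z + Q4 Y Z := by
  simp [Q4, add_mul]; ring

lemma Q4_smul_left (c : ℝ) (X Y : M4) : Q4 (c • X) Y = c * Q4 X Y := by
  simp [Q4, Matrix.smul_mul]; ring

lemma Q4_zero_left (Y : M4) : Q4 0 Y = 0 := by simp [Q4]

lemma Q4_neg_left (X Y : M4) : Q4 (-X) Y = -Q4 X Y := by
  simp [Q4, Matrix.neg_mul]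

lemma Q4_sub_left (X Y Z : M4) : Q4 (X - Y) Z = Q4 X Z - Q4 Y Z := by
  simp [Q4, sub_mul]; ring

lemma projN4_add (X Y : M4) : projN4 (X + Y) = projN4 X + projN4 Y := by
  simp only [projN4, Q4_add_left]
  module

lemma projN4_smul (c : ℝ) (X : M4) : projN4 (c • X) = c • projN4 X := by
  simp only [projN4, Q4_smul_left]
  module

lemma projN4_zero : projN4 0 = 0 := by
  simp [projN4, Q4_zero_left]

lemma projN4_neg (X : M4) : projN4 (-X) = -projN4 X := by
  simp only [projN4, Q4_neg_left]
  module

lemma projN4_k1 : projN4 k1 = 0 := by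
  simp [projN4, Q_k1u1, Q_k1u2, Q_k1v1, Q_k1v2]

lemma projN4_k2 : projN4 k2 = 0 := by
  simp [projN4, Q_k2u1, Q_k2u2, Q_k2v1, Q_k2v2]

lemma projN4_u1 : projN4 u1 = u1 := by
  simp only [projN4, Q_u1u1, Q_u1u2, Q_u1v1, Q_u1v2]
  norm_num
lemma projN4_u2 : projN4 u2 = u2 := by
  simp only [projN4, Q4_symm u2 u1, Q_u1u2, Q_u2u2, Q_u2v1, Q_u2v2]
  norm_num
lemma projN4_v1 : projN4 v1 = v1 := by
  simp only [projN4, Q4_symm v1 u1, Q4_symm v1 u2, Q_u1v1, Q_u2v1, Q_v1v1, Q_v1v2]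
  norm_num
lemma projN4_v2 : projN4 v2 = v2 := by
  simp only [projN4, Q4_symm v2 u1, Q4_symm v2 u2, Q4_symm v2 v1, Q_u1v2, Q_u2v2,
    Q_v1v2, Q_v2v2]
  norm_num

lemma projK4_add (X Y : M4) : projK4 (X + Y) = projK4 X + projK4 Y := by
  simp only [projK4, Q4_add_left]
  module

lemma projK4_smul (c : ℝ) (X : M4) : projK4 (c • X) = c • projK4 X := by
  simp only [projK4, Q4_smul_left]
  module

lemma projK4_zero : projK4 0 = 0 := by simp [projK4, Q4_zero_left]

lemma projK4_k1 : projK4 k1 = k1 := by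
  simp only [projK4, Q_k1k1, Q_k1k2]
  norm_num
lemma projK4_k2 : projK4 k2 = k2 := by
  simp only [projK4, Q4_symm k2 k1, Q_k1k2, Q_k2k2]
  norm_num

lemma u1_mem : u1 ∈ n4 := Submodule.subset_span (by simp)
lemma u2_mem : u2 ∈ n4 := Submodule.subset_span (by simp)
lemma v1_mem : v1 ∈ n4 := Submodule.subset_span (by simp)
lemma v2_mem : v2 ∈ n4 := Submodule.subset_span (by simp)
lemma bN4_mem (i : Fin 4) : bN4 i ∈ n4 := by
  fin_cases i
  exacts [u1_mem, u2_mem, v1_mem, v2_mem]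

lemma projN4_id : ∀ W ∈ n4, projN4 W = W := by
  intro W hW
  induction hW using Submodule.span_induction with
  | mem x hx =>
    rcases hx with rfl | rfl | rfl | rfl
    · exact projN4_u1
    · exact projN4_u2
    · exact projN4_v1
    · exact projN4_v2
  | zero => exact projN4_zero
  | add x y _ _ hx hy => rw [projN4_add, hx, hy]
  | smul c x _ hx => rw [projN4_smul, hx]

lemma lie_skew' (X Y : M4) : ⁅Y, X⁆ = -⁅X, Y⁆ := by rw [← lie_skew X Y, neg_neg]

lemma projN4_lie : ∀ X ∈ n4, ∀ Y ∈ n4, projN4 ⁅X, Y⁆ = 0 := by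
  have base : ∀ a ∈ ({u1, u2, v1, v2} : Set M4), ∀ b ∈ ({u1, u2, v1, v2} : Set M4),
      projN4 ⁅a, b⁆ = 0 := by
    intro a ha b hb
    rcases ha with rfl | rfl | rfl | rfl <;> rcases hb with rfl | rfl | rfl | rfl <;>
      simp [lie_self, lie_skew' u1 u2, lie_skew' u1 v1, lie_skew' u1 v2,
        lie_skew' u2 v1, lie_skew' u2 v2, lie_skew' v1 v2,
        lie_u1u2, lie_v1v2, lie_u1v1, lie_u1v2, lie_u2v1, lie_u2v2,
        projN4_zero, projN4_neg, projN4_add, projN4_smul, projN4_k1, projN4_k2]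
  intro X hX
  induction hX using Submodule.span_induction with
  | mem x hx =>
    intro Y hY
    induction hY using Submodule.span_induction with
    | mem y hy => exact base x hx y hy
    | zero => simp [projN4_zero]
    | add y z _ _ hy hz => rw [lie_add, projN4_add, hy, hz, add_zero]
    | smul c y _ hy => rw [lie_smul, projN4_smul, hy, smul_zero]
  | zero => intro Y _; simp [projN4_zero]
  | add x y _ _ hx hy =>
    intro Y hY; rw [add_lie, projN4_add, hx Y hY, hy Y hY, add_zero]
  | smul c x _ hx =>
    intro Y hY; rw [smul_lie, projN4_smul, hx Y hY, smul_zero]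

lemma projK4_neg (X : M4) : projK4 (-X) = -projK4 X := by
  simp only [projK4, Q4_neg_left]
  module

lemma bN40 : bN4 0 = u1 := rfl
lemma bN41 : bN4 1 = u2 := rfl
lemma bN42 : bN4 2 = v1 := rfl
lemma bN43 : bN4 3 = v2 := rfl

lemma P4_mem (m1 m2 : ℝ) (X : M4) : P4 m1 m2 X ∈ n4 := by
  refine Submodule.add_mem _ (Submodule.smul_mem _ _ ?_) (Submodule.smul_mem _ _ ?_) <;>
    refine Submodule.add_mem _ (Submodule.smul_mem _ _ ?_) (Submodule.smul_mem _ _ ?_)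
  exacts [u1_mem, u2_mem, v1_mem, v2_mem]

lemma SN_zero (l1 l2 : ℝ) (SN : M4 → M4 → M4)
    (hSNmem : ∀ X ∈ n4, ∀ Y ∈ n4, SN X Y ∈ n4)
    (hSNimp : ∀ X ∈ n4, ∀ Y ∈ n4, ∀ Z ∈ n4,
      (-2 : ℝ) * Q4 (SN X Y) Z =
        Q4 (projN4 ⁅X, Y⁆) Z + Q4 (projN4 ⁅P4 l1⁻¹ l2⁻¹ Z, X⁆) (P4 l1 l2 Y)
          + Q4 (projN4 ⁅P4 l1⁻¹ l2⁻¹ Z, Y⁆) (P4 l1 l2 X)) :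
    ∀ X ∈ n4, ∀ Y ∈ n4, SN X Y = 0 := by
  intro X hX Y hY
  have key : ∀ Z ∈ n4, Q4 (SN X Y) Z = 0 := by
    intro Z hZ
    have h := hSNimp X hX Y hY Z hZ
    rw [projN4_lie X hX Y hY, projN4_lie _ (P4_mem _ _ _) X hX,
      projN4_lie _ (P4_mem _ _ _) Y hY, Q4_zero_left, Q4_zero_left, Q4_zero_left] at h
    linarith
  have hmem := hSNmem X hX Y hY
  have := projN4_id _ hmem
  rw [projN4, key u1 u1_mem, key u2 u2_mem, key v1 v1_mem, key v2 v2_mem] at this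
  simpa using this.symm

lemma RmN4_eq (SN : M4 → M4 → M4)
    (hSN0 : ∀ X ∈ n4, ∀ Y ∈ n4, SN X Y = 0)
    {X Y W : M4} (hX : X ∈ n4) (hY : Y ∈ n4) (hW : W ∈ n4) :
    RmN4 SN X Y W = ⁅projK4 ⁅X, Y⁆, W⁆ := by
  rw [RmN4, hSN0 Y hY W hW, hSN0 X hX W hW, hSN0 X hX 0 (Submodule.zero_mem _),
    hSN0 Y hY 0 (Submodule.zero_mem _), projN4_lie X hX Y hY,
    hSN0 0 (Submodule.zero_mem _) W hW]
  simp

/-- The key computation: the sectional/Ricci sums for the symmetric-space curvature. -/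
lemma g_eq : ∀ X ∈ n4, ∀ k : Fin 4,
    (∑ i, Q4 ⁅projK4 ⁅X, bN4 i⁆, bN4 k⁆ (bN4 i)) = 4 * Q4 X (bN4 k) := by
  have base : ∀ a ∈ ({u1, u2, v1, v2} : Set M4), ∀ k : Fin 4,
      (∑ i, Q4 ⁅projK4 ⁅a, bN4 i⁆, bN4 k⁆ (bN4 i)) = 4 * Q4 a (bN4 k) := by
    intro a ha k
    rcases ha with rfl | rfl | rfl | rfl <;> fin_cases k <;>
      simp only [Fin.sum_univ_four, bN4, Matrix.cons_val_zero, Matrix.cons_val_one,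
        Matrix.head_cons, Matrix.cons_val_two, Matrix.tail_cons, Matrix.cons_val_three,
        lie_self, lie_skew' u1 u2, lie_skew' u1 v1, lie_skew' u1 v2,
        lie_skew' u2 v1, lie_skew' u2 v2, lie_skew' v1 v2,
        lie_u1u2, lie_v1v2, lie_u1v1, lie_u1v2, lie_u2v1, lie_u2v2,
        neg_zero, neg_add_rev, neg_smul, neg_neg,
        projK4_zero, projK4_add, projK4_smul, projK4_neg, projK4_k1, projK4_k2,
        zero_lie, add_lie, smul_lie, neg_lie,
        lie_k1u1, lie_k1u2, lie_k1v1, lie_k1v2, lie_k2u1, lie_k2u2, lie_k2v1, lie_k2v2,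
        Q4_zero_left, Q4_add_left, Q4_smul_left, Q4_neg_left,
        Q_u1u1, Q_u1u2, Q_u1v1, Q_u1v2, Q_u2u2, Q_u2v1, Q_u2v2, Q_v1v1, Q_v1v2, Q_v2v2,
        Q4_symm u2 u1, Q4_symm v1 u1, Q4_symm v2 u1, Q4_symm v1 u2, Q4_symm v2 u2,
        Q4_symm v2 v1] <;>
      norm_num [lie_self, lie_skew' u1 u2, lie_skew' u1 v1, lie_skew' u1 v2,
        lie_skew' u2 v1, lie_skew' u2 v2, lie_skew' v1 v2,
        lie_u1u2, lie_v1v2, lie_u1v1, lie_u1v2, lie_u2v1, lie_u2v2,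
        neg_zero, neg_add_rev, neg_smul, neg_neg,
        projK4_zero, projK4_add, projK4_smul, projK4_neg, projK4_k1, projK4_k2,
        zero_lie, add_lie, smul_lie, neg_lie,
        lie_k1u1, lie_k1u2, lie_k1v1, lie_k1v2, lie_k2u1, lie_k2u2, lie_k2v1, lie_k2v2,
        Q4_zero_left, Q4_add_left, Q4_smul_left, Q4_neg_left,
        Q_u1u1, Q_u1u2, Q_u1v1, Q_u1v2, Q_u2u2, Q_u2v1, Q_u2v2, Q_v1v1, Q_v1v2, Q_v2v2,
        Q4_symm u2 u1, Q4_symm v1 u1, Q4_symm v2 u1, Q4_symm v1 u2, Q4_symm v2 u2,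
        Q4_symm v2 v1]
  intro X hX
  induction hX using Submodule.span_induction with
  | mem x hx => exact base x hx
  | zero =>
    intro k
    simp [zero_lie, projK4_zero, Q4_zero_left]
  | add x y _ _ hx hy =>
    intro k
    have := hx k; have h2 := hy k
    simp only [add_lie, projK4_add, Q4_add_left, Q4_add_left, Finset.sum_add_distrib] at *
    rw [this, h2]; ring
  | smul c x _ hx =>
    intro k
    have := hx k
    simp only [smul_lie, projK4_smul, Q4_smul_left, ← Finset.mul_sum] at *
    rw [this]; ring

end AuxLemmas

/-- for `λ₁, λ₂ > 0`, the invariant metric `P = λ₁·Id_{𝔫₁} ⊕ λ₂·Id_{𝔫₂}` on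
`N = SO(4)/T² = S² × S²` satisfies `scal_N(P) = 1/λ₁ + 1/λ₂`; equivalently
`det(P)^{1/4}·scal_N(P) = (λ₁λ₂)^{1/2}(1/λ₁ + 1/λ₂)`.  In particular the normal metric
(`λ₁ = λ₂ = 1`) satisfies `Ric_N(Id_𝔫) = (1/2)·Id_𝔫`, i.e. it is Einstein.  Here `SN` is
the operator `S_N(P)` (defined by its implicit equation), `RicN` is the Ricci endomorphism
of `P` (defined through the trace of the curvature, computed in the `Q`-orthogonal basis
`bN4` of norm² `8`), and `scal_N(P) = Tr(P⁻¹.Ric_N(P))`. -/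
theorem scal_SO4_mod_torus (l1 l2 : ℝ) (h1 : 0 < l1) (h2 : 0 < l2)
    (SN : M4 → M4 → M4)
    (hSNmem : ∀ X ∈ n4, ∀ Y ∈ n4, SN X Y ∈ n4)
    (hSNimp : ∀ X ∈ n4, ∀ Y ∈ n4, ∀ Z ∈ n4,
      (-2 : ℝ) * Q4 (SN X Y) Z =
        Q4 (projN4 ⁅X, Y⁆) Z + Q4 (projN4 ⁅P4 l1⁻¹ l2⁻¹ Z, X⁆) (P4 l1 l2 Y)
          + Q4 (projN4 ⁅P4 l1⁻¹ l2⁻¹ Z, Y⁆) (P4 l1 l2 X))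
    (RicN : M4 → M4)
    (hRicNmem : ∀ X ∈ n4, RicN X ∈ n4)
    (hRicNchar : ∀ X ∈ n4, ∀ Y ∈ n4,
      Q4 (RicN X) Y = (1 / 8) * ∑ i, Q4 (RmN4 SN X (bN4 i) Y) (bN4 i)) :
    (1 / 8) * (∑ i, Q4 (P4 l1⁻¹ l2⁻¹ (RicN (bN4 i))) (bN4 i)) = 1 / l1 + 1 / l2 ∧
    ((l1 * l2) ^ (2 : ℕ)) ^ ((1 : ℝ) / 4) *
        ((1 / 8) * (∑ i, Q4 (P4 l1⁻¹ l2⁻¹ (RicN (bN4 i))) (bN4 i))) =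
      (l1 * l2) ^ ((1 : ℝ) / 2) * (1 / l1 + 1 / l2) ∧
    (l1 = 1 → l2 = 1 → ∀ X ∈ n4, RicN X = (1 / 2 : ℝ) • X) := by
  have hSN0 := SN_zero l1 l2 SN hSNmem hSNimp
  have Ric_pair : ∀ X ∈ n4, ∀ k : Fin 4,
      Q4 (RicN X) (bN4 k) = (1 / 2) * Q4 X (bN4 k) := by
    intro X hX k
    rw [hRicNchar X hX (bN4 k) (bN4_mem k)]
    have hr : ∀ i : Fin 4, RmN4 SN X (bN4 i) (bN4 k) = ⁅projK4 ⁅X, bN4 i⁆, bN4 k⁆ :=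
      fun i => RmN4_eq SN hSN0 hX (bN4_mem i) (bN4_mem k)
    simp only [hr]
    rw [g_eq X hX k]; ring
  have r11 : Q4 (RicN u1) u1 = 4 := by have := Ric_pair u1 u1_mem 0; rw [bN40, Q_u1u1] at this; linarith
  have r12 : Q4 (RicN u1) u2 = 0 := by have := Ric_pair u1 u1_mem 1; rw [bN41, Q_u1u2] at this; linarith
  have r13 : Q4 (RicN u1) v1 = 0 := by have := Ric_pair u1 u1_mem 2; rw [bN42, Q_u1v1] at this; linarith
  have r14 : Q4 (RicN u1) v2 = 0 := by have := Ric_pair u1 u1_mem 3; rw [bN43, Q_u1v2] at this; linarith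
  have r21 : Q4 (RicN u2) u1 = 0 := by have := Ric_pair u2 u2_mem 0; rw [bN40, Q4_symm u2 u1, Q_u1u2] at this; linarith
  have r22 : Q4 (RicN u2) u2 = 4 := by have := Ric_pair u2 u2_mem 1; rw [bN41, Q_u2u2] at this; linarith
  have r23 : Q4 (RicN u2) v1 = 0 := by have := Ric_pair u2 u2_mem 2; rw [bN42, Q_u2v1] at this; linarith
  have r24 : Q4 (RicN u2) v2 = 0 := by have := Ric_pair u2 u2_mem 3; rw [bN43, Q_u2v2] at this; linarith
  have r31 : Q4 (RicN v1) u1 = 0 := by have := Ric_pair v1 v1_mem 0; rw [bN40, Q4_symm v1 u1, Q_u1v1] at this; linarith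
  have r32 : Q4 (RicN v1) u2 = 0 := by have := Ric_pair v1 v1_mem 1; rw [bN41, Q4_symm v1 u2, Q_u2v1] at this; linarith
  have r33 : Q4 (RicN v1) v1 = 4 := by have := Ric_pair v1 v1_mem 2; rw [bN42, Q_v1v1] at this; linarith
  have r34 : Q4 (RicN v1) v2 = 0 := by have := Ric_pair v1 v1_mem 3; rw [bN43, Q_v1v2] at this; linarith
  have r41 : Q4 (RicN v2) u1 = 0 := by have := Ric_pair v2 v2_mem 0; rw [bN40, Q4_symm v2 u1, Q_u1v2] at this; linarith
  have r42 : Q4 (RicN v2) u2 = 0 := by have := Ric_pair v2 v2_mem 1; rw [bN41, Q4_symm v2 u2, Q_u2v2] at this; linarith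
  have r43 : Q4 (RicN v2) v1 = 0 := by have := Ric_pair v2 v2_mem 2; rw [bN42, Q4_symm v2 v1, Q_v1v2] at this; linarith
  have r44 : Q4 (RicN v2) v2 = 4 := by have := Ric_pair v2 v2_mem 3; rw [bN43, Q_v2v2] at this; linarith
  have hscal : (1 / 8) * (∑ i, Q4 (P4 l1⁻¹ l2⁻¹ (RicN (bN4 i))) (bN4 i))
      = 1 / l1 + 1 / l2 := by
    simp only [Fin.sum_univ_four, bN4, Matrix.cons_val_zero, Matrix.cons_val_one,
      Matrix.head_cons, Matrix.cons_val_two, Matrix.tail_cons, Matrix.cons_val_three,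
      P4, Q4_add_left, Q4_smul_left,
      r11, r12, r13, r14, r21, r22, r23, r24, r31, r32, r33, r34, r41, r42, r43, r44,
      Q_u1u1, Q_u1u2, Q_u1v1, Q_u1v2, Q_u2u2, Q_u2v1, Q_u2v2, Q_v1v1, Q_v1v2, Q_v2v2,
      Q4_symm u2 u1, Q4_symm v1 u1, Q4_symm v2 u1, Q4_symm v1 u2, Q4_symm v2 u2,
      Q4_symm v2 v1]
    field_simp
    ring
  refine ⟨hscal, ?_, ?_⟩
  · have hp : (0:ℝ) < l1 * l2 := mul_pos h1 h2
    have hr : (((l1 * l2) ^ (2:ℕ) : ℝ)) ^ ((1:ℝ)/4) = (l1 * l2) ^ ((1:ℝ)/2) := by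
      rw [← Real.rpow_natCast (l1 * l2) 2, ← Real.rpow_mul hp.le]
      norm_num
    rw [hscal, hr]
  · intro _ _ X hX
    have hm := hRicNmem X hX
    have e : RicN X = projN4 (RicN X) := (projN4_id _ hm).symm
    have q1 : Q4 (RicN X) u1 = 1 / 2 * Q4 X u1 := by have := Ric_pair X hX 0; rwa [bN40] at this
    have q2 : Q4 (RicN X) u2 = 1 / 2 * Q4 X u2 := by have := Ric_pair X hX 1; rwa [bN41] at this
    have q3 : Q4 (RicN X) v1 = 1 / 2 * Q4 X v1 := by have := Ric_pair X hX 2; rwa [bN42] at this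
    have q4 : Q4 (RicN X) v2 = 1 / 2 * Q4 X v2 := by have := Ric_pair X hX 3; rwa [bN43] at this
    rw [e, projN4, q1, q2, q3, q4]
    conv_rhs => rw [← projN4_id X hX]
    rw [projN4]
    module
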